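/- Any square box of side length √n on the grid can contain at most 2√n pairwise disconnected components of a connected shape, since each component must touch one of the four boundaries via a path, each length-√n boundary can support at most √n/2 distinct components, and there are 4 boundaries. -/

import Mathlib

/-- Two grid cells are adjacent (8-connectivity) if they are distinct and differ
by at most 1 in each coordinate. -/
def GridAdj (u v : ℤ × ℤ) : Prop :=
  u ≠ v ∧ |u.1 - v.1| ≤ 1 ∧ |u.2 - v.2| ≤ 1

/-- A set of cells is connected if any two of its cells are joined by a path of
adjacent cells inside the set. -/
def GridConn (A : Set (ℤ × ℤ)) : Prop :=
  ∀ u ∈ A, ∀ v ∈ A,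
    Relation.ReflTransGen (fun a b => GridAdj a b ∧ a ∈ A ∧ b ∈ A) u v

lemma GridAdj.symm' {u v : ℤ × ℤ} (h : GridAdj u v) : GridAdj v u :=
  ⟨h.1.symm, by rw [abs_sub_comm]; exact h.2.1, by rw [abs_sub_comm]; exact h.2.2⟩

lemma gridConn_singleton (c : ℤ × ℤ) : GridConn {c} := by
  intro u hu v hv
  simp only [Set.mem_singleton_iff] at hu hv
  subst hu; subst hv
  exact Relation.ReflTransGen.refl

lemma gridConn_union {A A' : Set (ℤ × ℤ)} (hA : GridConn A) (hA' : GridConn A')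
    {a a' : ℤ × ℤ} (ha : a ∈ A) (ha' : a' ∈ A') (hadj : GridAdj a a') :
    GridConn (A ∪ A') := by
  have mono1 : ∀ u v, Relation.ReflTransGen (fun p q => GridAdj p q ∧ p ∈ A ∧ q ∈ A) u v →
      Relation.ReflTransGen (fun p q => GridAdj p q ∧ p ∈ A ∪ A' ∧ q ∈ A ∪ A') u v :=
    fun u v h => Relation.ReflTransGen.mono (fun p q hpq => ⟨hpq.1, Or.inl hpq.2.1, Or.inl hpq.2.2⟩) u v h
  have mono2 : ∀ u v, Relation.ReflTransGen (fun p q => GridAdj p q ∧ p ∈ A' ∧ q ∈ A') u v →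
      Relation.ReflTransGen (fun p q => GridAdj p q ∧ p ∈ A ∪ A' ∧ q ∈ A ∪ A') u v :=
    fun u v h => Relation.ReflTransGen.mono (fun p q hpq => ⟨hpq.1, Or.inr hpq.2.1, Or.inr hpq.2.2⟩) u v h
  intro u hu v hv
  rcases hu with hu | hu <;> rcases hv with hv | hv
  · exact mono1 _ _ (hA u hu v hv)
  · exact (mono1 _ _ (hA u hu a ha)).trans
      ((Relation.ReflTransGen.single ⟨hadj, Or.inl ha, Or.inr ha'⟩).trans
        (mono2 _ _ (hA' a' ha' v hv)))
  · exact (mono2 _ _ (hA' u hu a' ha')).trans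
      ((Relation.ReflTransGen.single ⟨hadj.symm', Or.inr ha', Or.inl ha⟩).trans
        (mono1 _ _ (hA a ha v hv)))
  · exact mono2 _ _ (hA' u hu v hv)

/-- Classifier for boundary cells of the `s × s` box at `(x,y)`:
assigns each boundary cell an index in `[0, 2s)` such that two boundary cells
with the same index are within 1 of each other in each coordinate. -/
def gIdx (x y : ℤ) (s : ℕ) (p : ℤ × ℤ) : ℤ :=
  if p.1 = x then (p.2 - y) / 2
  else if p.1 = x + s - 1 then ((s : ℤ) + 1) / 2 + (p.2 - y) / 2
  else if p.2 = y then 2 * (((s : ℤ) + 1) / 2) + (p.1 - x - 1) / 2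
  else 2 * (((s : ℤ) + 1) / 2) + ((s : ℤ) - 1) / 2 + (p.1 - x - 1) / 2

lemma gIdx_bound (x y : ℤ) (s : ℕ) (p : ℤ × ℤ)
    (hp : x ≤ p.1 ∧ p.1 < x + s ∧ y ≤ p.2 ∧ p.2 < y + s) :
    0 ≤ gIdx x y s p ∧ gIdx x y s p < 2 * s := by
  unfold gIdx
  split_ifs <;> omega

lemma gIdx_adj (x y : ℤ) (s : ℕ) (p q : ℤ × ℤ)
    (hp : x ≤ p.1 ∧ p.1 < x + s ∧ y ≤ p.2 ∧ p.2 < y + s)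
    (hq : x ≤ q.1 ∧ q.1 < x + s ∧ y ≤ q.2 ∧ q.2 < y + s)
    (hpb : p.1 = x ∨ p.1 = x + s - 1 ∨ p.2 = y ∨ p.2 = y + s - 1)
    (hqb : q.1 = x ∨ q.1 = x + s - 1 ∨ q.2 = y ∨ q.2 = y + s - 1)
    (heq : gIdx x y s p = gIdx x y s q) :
    -1 ≤ p.1 - q.1 ∧ p.1 - q.1 ≤ 1 ∧ -1 ≤ p.2 - q.2 ∧ p.2 - q.2 ≤ 1 := by
  unfold gIdx at heq
  split_ifs at heq <;> omega

/-- Any `√n × √n` box can contain at most `2√n` pairwise disjoint components of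
a connected shape `S`: if `C 0, …, C (r-1)` are nonempty, pairwise disjoint,
connected, maximal connected subsets of `S ∩ B` for a `s × s` box `B`
(`s = √n`), then `r ≤ 2s`. -/
theorem components_in_box_bound (n s : ℕ) (hs : s * s = n) (hs0 : 0 < s)
    (x y : ℤ) (S : Set (ℤ × ℤ)) (hSconn : GridConn S)
    (B : Set (ℤ × ℤ))
    (hB : B = {p : ℤ × ℤ | x ≤ p.1 ∧ p.1 < x + s ∧ y ≤ p.2 ∧ p.2 < y + s})
    (r : ℕ) (C : Fin r → Set (ℤ × ℤ))
    (hsub : ∀ i, C i ⊆ S ∩ B)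
    (hne : ∀ i, (C i).Nonempty)
    (hconn : ∀ i, GridConn (C i))
    (hmax : ∀ i, ∀ A : Set (ℤ × ℤ), C i ⊆ A → A ⊆ S ∩ B → GridConn A → A = C i)
    (hdisj : ∀ i j, i ≠ j → Disjoint (C i) (C j)) :
    r ≤ 2 * s := by
  rcases le_or_gt r 2 with hr | hr
  · omega
  -- cells of distinct components are never adjacent
  have hnadj : ∀ i j, i ≠ j → ∀ u ∈ C i, ∀ v ∈ C j, ¬ GridAdj u v := by
    intro i j hij u hu v hv hadj
    have hU : GridConn (C i ∪ C j) := gridConn_union (hconn i) (hconn j) hu hv hadj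
    have hsubU : C i ∪ C j ⊆ S ∩ B := Set.union_subset (hsub i) (hsub j)
    have hAeq := hmax i (C i ∪ C j) Set.subset_union_left hsubU hU
    have hvCi : v ∈ C i := by rw [← hAeq]; exact Or.inr hv
    exact Set.disjoint_left.1 (hdisj i j hij) hvCi hv
  -- absorption: a cell of S ∩ B adjacent to a component lies in the component
  have habs : ∀ i, ∀ b ∈ C i, ∀ c, c ∈ S ∩ B → GridAdj b c → c ∈ C i := by
    intro i b hb c hc hadj
    have hU : GridConn (C i ∪ {c}) :=
      gridConn_union (hconn i) (gridConn_singleton c) hb rfl hadj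
    have hsubU : C i ∪ {c} ⊆ S ∩ B := by
      rintro z (hz | hz)
      · exact hsub i hz
      · simp only [Set.mem_singleton_iff] at hz; subst hz; exact hc
    have hAeq := hmax i (C i ∪ {c}) Set.subset_union_left hsubU hU
    rw [← hAeq]; exact Or.inr rfl
  -- every component contains a boundary cell
  have hborder : ∀ i : Fin r, ∃ w ∈ C i,
      w.1 = x ∨ w.1 = x + s - 1 ∨ w.2 = y ∨ w.2 = y + s - 1 := by
    intro i
    obtain ⟨j, hij⟩ : ∃ j : Fin r, j ≠ i := by
      by_cases h0 : i = ⟨0, by omega⟩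
      · exact ⟨⟨1, by omega⟩, by rw [h0]; simp [Fin.ext_iff]⟩
      · exact ⟨⟨0, by omega⟩, fun he => h0 he.symm⟩
    obtain ⟨u, hu⟩ := hne i
    obtain ⟨v, hv⟩ := hne j
    have hpath := hSconn u (hsub i hu).1 v (hsub j hv).1
    have key : ∀ v' : ℤ × ℤ,
        Relation.ReflTransGen (fun a b => GridAdj a b ∧ a ∈ S ∧ b ∈ S) u v' →
        v' ∈ C i ∨ ∃ w ∈ C i,
          w.1 = x ∨ w.1 = x + s - 1 ∨ w.2 = y ∨ w.2 = y + s - 1 := by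
      intro v' hp
      induction hp with
      | refl => exact Or.inl hu
      | @tail b c hab hbc ih =>
        rcases ih with hb | hex
        · by_cases hcB : x ≤ c.1 ∧ c.1 < x + s ∧ y ≤ c.2 ∧ c.2 < y + s
          · exact Or.inl (habs i b hb c ⟨hbc.2.2, by rw [hB]; exact hcB⟩ hbc.1)
          · refine Or.inr ⟨b, hb, ?_⟩
            have hbB : b ∈ B := (hsub i hb).2
            rw [hB] at hbB
            simp only [Set.mem_setOf_eq] at hbB
            have h1 := abs_le.mp hbc.1.2.1
            have h2 := abs_le.mp hbc.1.2.2
            omega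
        · exact Or.inr hex
    rcases key v hpath with hvCi | hex
    · exact absurd hvCi (Set.disjoint_left.1 (hdisj j i hij) hv)
    · exact hex
  choose f hfC hfb using hborder
  have hfBox : ∀ i : Fin r, x ≤ (f i).1 ∧ (f i).1 < x + s ∧ y ≤ (f i).2 ∧ (f i).2 < y + s := by
    intro i
    have := (hsub i (hfC i)).2
    rw [hB] at this
    exact this
  -- the injection into Fin (2s)
  have hF : ∀ i : Fin r, (gIdx x y s (f i)).toNat < 2 * s := by
    intro i
    have := gIdx_bound x y s (f i) (hfBox i)
    omega
  set F : Fin r → Fin (2 * s) := fun i => ⟨(gIdx x y s (f i)).toNat, hF i⟩ with hFdef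
  have hFinj : Function.Injective F := by
    intro i j hFij
    by_contra hij
    have hgeq : gIdx x y s (f i) = gIdx x y s (f j) := by
      have h1 := (gIdx_bound x y s (f i) (hfBox i)).1
      have h2 := (gIdx_bound x y s (f j) (hfBox j)).1
      have := Fin.mk.injEq _ (hF i) _ (hF j) ▸ congrArg Fin.val hFij
      simp only [hFdef] at hFij
      have hval : (gIdx x y s (f i)).toNat = (gIdx x y s (f j)).toNat :=
        congrArg Fin.val hFij
      omega
    have hadj := gIdx_adj x y s (f i) (f j) (hfBox i) (hfBox j) (hfb i) (hfb j) hgeq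
    have hne' : f i ≠ f j := by
      intro he
      exact Set.disjoint_left.1 (hdisj i j hij) (hfC i) (he ▸ hfC j)
    exact hnadj i j hij (f i) (hfC i) (f j) (hfC j)
      ⟨hne', abs_le.mpr ⟨hadj.1, hadj.2.1⟩, abs_le.mpr ⟨hadj.2.2.1, hadj.2.2.2⟩⟩
  have := Fintype.card_le_of_injective F hFinj
  simpa using this
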